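/- For a Poisson random variable with mean b (b a positive integer), E[min{Pois(b), b}] = b(1 - e^{-b} b^{b-1}/(b-1)!). Equivalently, (1/b)·E[min{Pois(b),b}] = 1 - e^{-b} b^{b-1}/(b-1)!. -/

import Mathlib

open Real

/-- pmf of a Poisson random variable with mean `μ` at `k`. -/
noncomputable def poissonPMF (μ : ℝ) (k : ℕ) : ℝ :=
  Real.exp (-μ) * μ ^ k / (Nat.factorial k)

/-- `E[min{Pois(μ), c}]` for a real cap `c`. -/
noncomputable def expMinPois (μ : ℝ) (c : ℝ) : ℝ :=
  ∑' k : ℕ, poissonPMF μ k * min (k : ℝ) c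

lemma pois_hasSum (b : ℕ) : HasSum (fun k => poissonPMF (b : ℝ) k) 1 := by
  have h := ProbabilityTheory.poissonPMFRealSum (b : NNReal)
  have : (fun k => poissonPMF (b : ℝ) k) = fun k => ProbabilityTheory.poissonPMFReal (b : NNReal) k := by
    funext k; simp [poissonPMF, ProbabilityTheory.poissonPMFReal]
  rw [this]; exact h

lemma pois_nonneg (b : ℕ) (k : ℕ) : 0 ≤ poissonPMF (b : ℝ) k := by
  unfold poissonPMF
  positivity

theorem stmt_0 (b : ℕ) (hb : 0 < b) :
    expMinPois (b : ℝ) (b : ℝ)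
      = (b : ℝ) * (1 - Real.exp (-(b : ℝ)) * (b : ℝ) ^ (b - 1) / (Nat.factorial (b - 1))) := by
  set p : ℕ → ℝ := fun k => poissonPMF (b : ℝ) k with hp
  have hsum : HasSum p 1 := pois_hasSum b
  -- the correction term, finitely supported
  set h : ℕ → ℝ := fun k => ((b : ℝ) - min (k : ℝ) (b : ℝ)) * p k with hh
  have hzero : ∀ k ∉ Finset.range b, h k = 0 := by
    intro k hk
    simp only [Finset.mem_range, not_lt] at hk
    have : min (k : ℝ) (b : ℝ) = (b : ℝ) := min_eq_right (by exact_mod_cast hk)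
    simp [hh, this]
  have hhsum : Summable h := summable_of_finite_support (by
    apply Set.Finite.subset (Finset.range b).finite_toSet
    intro k hk
    by_contra hk'
    exact hk (hzero k hk'))
  have hbsum : Summable (fun k => (b : ℝ) * p k) := (hsum.summable).mul_left _
  have hfeq : (fun k => p k * min (k : ℝ) (b : ℝ)) = fun k => (b : ℝ) * p k - h k := by
    funext k; simp [hh]; ring
  have htsum : expMinPois (b : ℝ) (b : ℝ) = (b : ℝ) * 1 - ∑' k, h k := by
    rw [expMinPois, hfeq, ← hsum.tsum_eq]
    rw [Summable.tsum_sub hbsum hhsum, ← tsum_mul_left]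
  -- evaluate the finite sum via telescoping
  set g : ℕ → ℝ := fun k =>
    if k = 0 then 0 else Real.exp (-(b : ℝ)) * (b : ℝ) ^ k / (Nat.factorial (k - 1)) with hg
  have hstep : ∀ k ∈ Finset.range b, h k = g (k + 1) - g k := by
    intro k hk
    simp only [Finset.mem_range] at hk
    have hmin : min (k : ℝ) (b : ℝ) = (k : ℝ) := min_eq_left (by exact_mod_cast hk.le)
    rcases Nat.eq_zero_or_pos k with rfl | hk0
    · simp [hh, hg, hp, poissonPMF]; ring
    · have hkf : (Nat.factorial k : ℝ) = (k : ℝ) * (Nat.factorial (k - 1) : ℝ) := by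
        conv_lhs => rw [← Nat.succ_pred_eq_of_pos hk0, Nat.factorial_succ]
        push_cast
        rw [Nat.pred_eq_sub_one, Nat.cast_pred hk0]
        ring
      have hk1 : k + 1 - 1 = k := rfl
      simp only [hh, hg, hp, poissonPMF, hmin, if_neg (Nat.succ_ne_zero k),
        if_neg hk0.ne', hk1]
      have hf1 : (Nat.factorial k : ℝ) ≠ 0 := Nat.cast_ne_zero.mpr (Nat.factorial_ne_zero k)
      have hf2 : (Nat.factorial (k - 1) : ℝ) ≠ 0 := Nat.cast_ne_zero.mpr (Nat.factorial_ne_zero _)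
      field_simp [hkf]
      rw [hkf]
      ring
  have hsum_h : ∑' k, h k = g b := by
    rw [tsum_eq_sum hzero, Finset.sum_congr rfl hstep, Finset.sum_range_sub]
    simp [hg]
  have hgb : g b = (b : ℝ) * (Real.exp (-(b : ℝ)) * (b : ℝ) ^ (b - 1) / (Nat.factorial (b - 1))) := by
    simp only [hg, if_neg hb.ne']
    have hpow : (b : ℝ) ^ (b - 1) * (b : ℝ) = (b : ℝ) ^ b := by
      rw [← pow_succ]; congr 1; omega
    rw [← hpow]; ring
  rw [htsum, hsum_h, hgb]
  ring
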